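/- For the family R_i(y,z) = α₁·y_i + α₂·(z_i/Z)·Y + (1 − α₁ − α₂)·(Y/n) with α₁, α₂ ∈ ℝ, the dummy axiom (R_i(y,z) = 0 whenever y_i = z_i = 0) holds for all problems on a set N with n ≥ 2 if and only if α₁ + α₂ = 1. -/
import Mathlib


noncomputable def linR {n : ℕ} (α₁ α₂ : ℝ) (y z : Fin n → ℝ) (i : Fin n) : ℝ :=
  α₁ * y i + α₂ * (z i / ∑ j, z j) * ∑ j, y j
    + (1 - α₁ - α₂) * ((∑ j, y j) / n)

/-- Within the linear family, the dummy axiom holds for all problems iff `α₁ + α₂ = 1`. -/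
theorem linR_dummy_iff {n : ℕ} (hn : 2 ≤ n) (α₁ α₂ : ℝ) :
    (∀ y z : Fin n → ℝ, (∀ i, 0 ≤ z i) → 0 < ∑ i, z i →
      ∀ i, y i = 0 → z i = 0 → linR α₁ α₂ y z i = 0)
    ↔ α₁ + α₂ = 1 := by
  constructor
  · intro h
    have hn0 : (0 : ℕ) < n := by omega
    have h1n : (1 : ℕ) < n := by omega
    set i0 : Fin n := ⟨0, hn0⟩
    set i1 : Fin n := ⟨1, h1n⟩
    set f : Fin n → ℝ := fun k => if k = i1 then 1 else 0 with hf
    have hsum : ∑ j, f j = 1 := by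
      simp [hf]
    have hz : ∀ i, 0 ≤ f i := by
      intro i; simp [hf]; positivity
    have hne : i0 ≠ i1 := by
      intro hc
      have : (0 : ℕ) = 1 := congrArg Fin.val hc
      omega
    have h0 := h f f hz (by rw [hsum]; norm_num) i0 (by simp [hf, hne]) (by simp [hf, hne])
    rw [linR] at h0
    simp only [hsum] at h0
    have hf0 : f i0 = 0 := by simp [hf, hne]
    rw [hf0] at h0
    have hnR : (n : ℝ) ≠ 0 := Nat.cast_ne_zero.mpr (by omega)
    have := h0
    field_simp at this
    linarith
  · intro h y z hz hZ i hy hzi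
    rw [linR, hy, hzi]
    have : 1 - α₁ - α₂ = 0 := by linarith
    simp [this]
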